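/- (Main Theorem, case i = 1.) Let x, x' be distinct nonsingular vectors of V(2n,2), and let (P, H) = f(x), (P', H') = f(x'). Then Q(x + x') = 1 (i.e. the line span{x, x'} is disjoint from the quadric, relation C₁) if and only if exactly one of the two containments P ≤ H' and P' ≤ H holds (relation A₁). -/

import Mathlib

/-- The hyperbolic quadratic form on `V(2n,2)`:
`Q x = ∑_{i=0}^{n-1} x (2i) * x (2i+1)`. -/
def Q (n : ℕ) (x : Fin (2*n) → ZMod 2) : ZMod 2 :=
  ∑ i : Fin n, x ⟨2*i.1, by have := i.2; omega⟩ * x ⟨2*i.1+1, by have := i.2; omega⟩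

/-- The bilinear form associated with `Q`: `B u v = Q (u+v) + Q u + Q v`. -/
def B (n : ℕ) (u v : Fin (2*n) → ZMod 2) : ZMod 2 :=
  Q n (u + v) + Q n u + Q n v

lemma B_eq (n : ℕ) (u v : Fin (2*n) → ZMod 2) :
    B n u v = ∑ i : Fin n,
      (u ⟨2*i.1, by have := i.2; omega⟩ * v ⟨2*i.1+1, by have := i.2; omega⟩
        + u ⟨2*i.1+1, by have := i.2; omega⟩ * v ⟨2*i.1, by have := i.2; omega⟩) := by
  have key : ∀ a b c d : ZMod 2, (a+c)*(b+d) + a*b + c*d = a*d + c*b := by decide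
  simp only [B, Q, Pi.add_apply, ← Finset.sum_add_distrib]
  exact Finset.sum_congr rfl fun i _ => by rw [key]; ring

lemma B_add_left (n : ℕ) (u v w : Fin (2*n) → ZMod 2) :
    B n (u + v) w = B n u w + B n v w := by
  simp only [B_eq, Pi.add_apply, ← Finset.sum_add_distrib]
  exact Finset.sum_congr rfl fun i _ => by ring

lemma B_smul_left (n : ℕ) (c : ZMod 2) (v w : Fin (2*n) → ZMod 2) :
    B n (c • v) w = c * B n v w := by
  simp only [B_eq, Pi.smul_apply, smul_eq_mul, Finset.mul_sum]
  exact Finset.sum_congr rfl fun i _ => by ring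

/-- The perp `S^⊥ = {v : B v s = 0 for all s ∈ S}` of a subspace `S`
with respect to the bilinear form `B`. -/
def perp (n : ℕ) (S : Submodule (ZMod 2) (Fin (2*n) → ZMod 2)) :
    Submodule (ZMod 2) (Fin (2*n) → ZMod 2) where
  carrier := {v | ∀ s ∈ S, B n v s = 0}
  zero_mem' := by intro s _; simp [B_eq]
  add_mem' := by
    intro a b ha hb s hs
    rw [B_add_left, ha s hs, hb s hs, add_zero]
  smul_mem' := by
    intro c v hv s hs
    rw [B_smul_left, hv s hs, mul_zero]

/-- `Π`, the span of the even-indexed standard basis vectors `e_{2i}`,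
a maximal totally singular subspace. -/
def PiSub (n : ℕ) : Submodule (ZMod 2) (Fin (2*n) → ZMod 2) :=
  Submodule.span (ZMod 2) {v | ∃ j : Fin (2*n), j.1 % 2 = 0 ∧ v = Pi.single j 1}

/-- `Σ`, the span of the odd-indexed standard basis vectors `e_{2i+1}`,
a maximal totally singular subspace disjoint from `Π`. -/
def SigmaSub (n : ℕ) : Submodule (ZMod 2) (Fin (2*n) → ZMod 2) :=
  Submodule.span (ZMod 2) {v | ∃ j : Fin (2*n), j.1 % 2 = 1 ∧ v = Pi.single j 1}

/-- The map `f` sending a nonsingular vector `x` to the antiflag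
`(P, H) = ((span{x}^⊥ ⊓ Π)^⊥ ⊓ Σ, span{x}^⊥ ⊓ Σ)` of `Σ`. -/
def antiflagMap (n : ℕ) (x : Fin (2*n) → ZMod 2) :
    Submodule (ZMod 2) (Fin (2*n) → ZMod 2) × Submodule (ZMod 2) (Fin (2*n) → ZMod 2) :=
  (perp n (perp n (Submodule.span (ZMod 2) {x}) ⊓ PiSub n) ⊓ SigmaSub n,
   perp n (Submodule.span (ZMod 2) {x}) ⊓ SigmaSub n)




/-- even index `2i` as element of `Fin (2*n)` -/
def ev (n : ℕ) (i : Fin n) : Fin (2*n) := ⟨2*i.1, by have := i.2; omega⟩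
/-- odd index `2i+1` as element of `Fin (2*n)` -/
def od (n : ℕ) (i : Fin n) : Fin (2*n) := ⟨2*i.1+1, by have := i.2; omega⟩

lemma ev_mod (n : ℕ) (i : Fin n) : (ev n i).1 % 2 = 0 := by simp [ev, Nat.mul_mod_right]
lemma od_mod (n : ℕ) (i : Fin n) : (od n i).1 % 2 = 1 := by simp [od, Nat.mul_add_mod]

lemma od_ne_ev (n : ℕ) (i j : Fin n) : od n i ≠ ev n j := by
  intro h
  have := congrArg Fin.val h
  simp [ev, od] at this; omega

lemma ev_ne_ev (n : ℕ) {i j : Fin n} (h : i ≠ j) : ev n i ≠ ev n j := by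
  intro he; apply h
  have := congrArg Fin.val he
  simp [ev] at this
  exact Fin.ext this

lemma Q_eq' (n : ℕ) (x : Fin (2*n) → ZMod 2) :
    Q n x = ∑ i : Fin n, x (ev n i) * x (od n i) := rfl

lemma B_eq' (n : ℕ) (u v : Fin (2*n) → ZMod 2) :
    B n u v = ∑ i : Fin n,
      (u (ev n i) * v (od n i) + u (od n i) * v (ev n i)) := B_eq n u v

lemma B_comm (n : ℕ) (u v : Fin (2*n) → ZMod 2) : B n u v = B n v u := by
  simp only [B_eq']
  exact Finset.sum_congr rfl fun i _ => by ring

lemma B_smul_right (n : ℕ) (c : ZMod 2) (v w : Fin (2*n) → ZMod 2) :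
    B n v (c • w) = c * B n v w := by
  rw [B_comm, B_smul_left, B_comm]

lemma mem_perp_span (n : ℕ) (x v : Fin (2*n) → ZMod 2) :
    v ∈ perp n (Submodule.span (ZMod 2) {x}) ↔ B n v x = 0 := by
  constructor
  · intro h; exact h x (Submodule.mem_span_singleton_self x)
  · intro h s hs
    obtain ⟨c, rfl⟩ := Submodule.mem_span_singleton.mp hs
    rw [B_smul_right, h, mul_zero]

lemma mem_span_single (n : ℕ) (r : ℕ) (v : Fin (2*n) → ZMod 2) :
    v ∈ Submodule.span (ZMod 2)
        {w : Fin (2*n) → ZMod 2 | ∃ j : Fin (2*n), j.1 % 2 = r ∧ w = Pi.single j 1}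
      ↔ ∀ j : Fin (2*n), j.1 % 2 ≠ r → v j = 0 := by
  constructor
  · intro hv
    have hle : Submodule.span (ZMod 2)
        {w : Fin (2*n) → ZMod 2 | ∃ j : Fin (2*n), j.1 % 2 = r ∧ w = Pi.single j 1} ≤
        { carrier := {v : Fin (2*n) → ZMod 2 | ∀ j : Fin (2*n), j.1 % 2 ≠ r → v j = 0},
          zero_mem' := fun _ _ => rfl,
          add_mem' := fun {a b} ha hb j hj => by
            simp only [Pi.add_apply, ha j hj, hb j hj, add_zero],
          smul_mem' := fun c w hw j hj => by
            simp only [Pi.smul_apply, hw j hj, smul_zero] } := by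
      rw [Submodule.span_le]
      rintro w ⟨j, hj, rfl⟩ k hk
      exact Pi.single_eq_of_ne (fun h : k = j => hk (by rw [h]; exact hj)) 1
    exact hle hv
  · intro h
    rw [← Finset.univ_sum_single v]
    refine Submodule.sum_mem _ fun j _ => ?_
    by_cases hj : j.1 % 2 = r
    · have hsingle : Pi.single j (v j) = v j • (Pi.single j 1 : Fin (2*n) → ZMod 2) := by
        rw [← Pi.single_smul, smul_eq_mul, mul_one]
      rw [hsingle]
      exact Submodule.smul_mem _ _ (Submodule.subset_span ⟨j, hj, rfl⟩)
    · rw [h j hj, Pi.single_zero]; exact Submodule.zero_mem _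

/-- the "odd part" of a vector: keep odd coordinates, zero out even ones. -/
def oddPart (n : ℕ) (x : Fin (2*n) → ZMod 2) : Fin (2*n) → ZMod 2 :=
  fun j => if j.1 % 2 = 1 then x j else 0

lemma oddPart_ev (n : ℕ) (x : Fin (2*n) → ZMod 2) (i : Fin n) :
    oddPart n x (ev n i) = 0 := by
  simp only [oddPart]
  rw [if_neg (by rw [ev_mod]; omega)]

lemma oddPart_od (n : ℕ) (x : Fin (2*n) → ZMod 2) (i : Fin n) :
    oddPart n x (od n i) = x (od n i) := by
  simp only [oddPart]
  rw [if_pos (od_mod n i)]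

lemma oddPart_mem_Sigma (n : ℕ) (x : Fin (2*n) → ZMod 2) :
    oddPart n x ∈ SigmaSub n := by
  rw [SigmaSub, mem_span_single]
  intro j hj
  simp only [oddPart]
  rw [if_neg hj]

lemma B_single_ev (n : ℕ) (i : Fin n) (y : Fin (2*n) → ZMod 2) :
    B n ((Pi.single (ev n i) 1 : Fin (2*n) → ZMod 2)) y = y (od n i) := by
  rw [B_eq', Finset.sum_eq_single i]
  · rw [Pi.single_eq_same, Pi.single_eq_of_ne (od_ne_ev n i i)]
    ring
  · intro m _ hm
    rw [Pi.single_eq_of_ne (ev_ne_ev n hm), Pi.single_eq_of_ne (od_ne_ev n m i)]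
    ring
  · intro h; exact absurd (Finset.mem_univ i) h

lemma two_eq_zero' : ∀ a : ZMod 2, a + a = 0 := by decide
lemma zmod2_add_eq_zero : ∀ a c : ZMod 2, a + c = 0 → a = c := by decide

/-- The first component of the antiflag is the span of the odd part. -/
lemma P_eq (n : ℕ) (x : Fin (2*n) → ZMod 2) (hx : Q n x = 1) :
    perp n (perp n (Submodule.span (ZMod 2) {x}) ⊓ PiSub n) ⊓ SigmaSub n
      = Submodule.span (ZMod 2) {oddPart n x} := by
  obtain ⟨k, hk⟩ : ∃ k : Fin n, x (od n k) = 1 := by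
    by_contra hcon
    push_neg at hcon
    have h0 : ∀ k : Fin n, x (od n k) = 0 := by
      intro k
      have := hcon k
      revert this
      generalize x (od n k) = a
      revert a; decide
    rw [Q_eq'] at hx
    simp only [h0, mul_zero, Finset.sum_const_zero] at hx
    exact absurd hx (by decide)
  apply le_antisymm
  · rintro v hv
    rw [Submodule.mem_inf] at hv
    obtain ⟨hv1, hv2⟩ := hv
    rw [SigmaSub, mem_span_single] at hv2
    rw [Submodule.mem_span_singleton]
    refine ⟨v (od n k), ?_⟩
    have key : ∀ j : Fin n, v (od n j) = x (od n j) * v (od n k) := by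
      intro j
      set u : Fin (2*n) → ZMod 2 :=
        (Pi.single (ev n j) 1 : Fin (2*n) → ZMod 2) + x (od n j) • (Pi.single (ev n k) 1 : Fin (2*n) → ZMod 2) with hu
      have hu_pi : u ∈ PiSub n := by
        rw [PiSub, mem_span_single]
        intro m hm
        have h1 : m ≠ ev n j := fun h => hm (h ▸ ev_mod n j)
        have h2 : m ≠ ev n k := fun h => hm (h ▸ ev_mod n k)
        simp only [hu, Pi.add_apply, Pi.smul_apply, Pi.single_eq_of_ne h1,
          Pi.single_eq_of_ne h2, smul_zero, add_zero]
      have hu_perp : u ∈ perp n (Submodule.span (ZMod 2) {x}) := by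
        rw [mem_perp_span, hu, B_add_left, B_smul_left, B_single_ev, B_single_ev,
          hk, mul_one]
        exact two_eq_zero' _
      have hBvu : B n v u = 0 := hv1 u (Submodule.mem_inf.mpr ⟨hu_perp, hu_pi⟩)
      have hBvu2 : B n v u = v (od n j) + x (od n j) * v (od n k) := by
        rw [B_comm, hu, B_add_left, B_smul_left, B_single_ev, B_single_ev]
      rw [hBvu2] at hBvu
      exact zmod2_add_eq_zero _ _ hBvu
    funext m
    by_cases hm : m.1 % 2 = 1
    · set j : Fin n := ⟨m.1/2, by have := m.2; omega⟩ with hj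
      have hmj : m = od n j := by
        apply Fin.ext; simp [od, hj]; omega
      rw [hmj, key j, Pi.smul_apply, oddPart_od, smul_eq_mul]
      ring
    · rw [hv2 m hm, Pi.smul_apply, smul_eq_mul]
      simp only [oddPart]
      rw [if_neg hm, mul_zero]
  · rw [Submodule.span_singleton_le_iff_mem, Submodule.mem_inf]
    refine ⟨?_, oddPart_mem_Sigma n x⟩
    intro u hu
    rw [Submodule.mem_inf] at hu
    obtain ⟨hu1, hu2⟩ := hu
    rw [PiSub, mem_span_single] at hu2
    have hBux : B n u x = 0 := hu1 x (Submodule.mem_span_singleton_self x)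
    have heq : B n (oddPart n x) u = B n x u := by
      rw [B_eq', B_eq']
      refine Finset.sum_congr rfl fun i _ => ?_
      have h1 : u (od n i) = 0 := hu2 _ (by rw [od_mod]; omega)
      rw [oddPart_ev, oddPart_od, h1]
      ring
    rw [heq, B_comm, hBux]

/-- Main Theorem, case `i = 1`: for distinct nonsingular vectors `x, x'` with
`f x = (P, H)` and `f x' = (P', H')`, the line `span{x, x'}` is disjoint from the
quadric (i.e. `Q (x + x') = 1`, relation `C₁`) if and only if exactly one of
`P ≤ H'` and `P' ≤ H` holds (relation `A₁`). -/
theorem main_case_one (n : ℕ) (hn : 2 ≤ n) (x x' : Fin (2*n) → ZMod 2)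
    (hxx' : x ≠ x') (hx : Q n x = 1) (hx' : Q n x' = 1) :
    Q n (x + x') = 1 ↔
      Xor' ((antiflagMap n x).1 ≤ (antiflagMap n x').2)
        ((antiflagMap n x').1 ≤ (antiflagMap n x).2) := by
  have hH1 : ((antiflagMap n x).1 ≤ (antiflagMap n x').2) ↔ B n (oddPart n x) x' = 0 := by
    show (perp n (perp n (Submodule.span (ZMod 2) {x}) ⊓ PiSub n) ⊓ SigmaSub n ≤
      perp n (Submodule.span (ZMod 2) {x'}) ⊓ SigmaSub n) ↔ _
    rw [P_eq n x hx, Submodule.span_singleton_le_iff_mem, Submodule.mem_inf, mem_perp_span]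
    exact ⟨fun h => h.1, fun h => ⟨h, oddPart_mem_Sigma n x⟩⟩
  have hH2 : ((antiflagMap n x').1 ≤ (antiflagMap n x).2) ↔ B n (oddPart n x') x = 0 := by
    show (perp n (perp n (Submodule.span (ZMod 2) {x'}) ⊓ PiSub n) ⊓ SigmaSub n ≤
      perp n (Submodule.span (ZMod 2) {x}) ⊓ SigmaSub n) ↔ _
    rw [P_eq n x' hx', Submodule.span_singleton_le_iff_mem, Submodule.mem_inf, mem_perp_span]
    exact ⟨fun h => h.1, fun h => ⟨h, oddPart_mem_Sigma n x'⟩⟩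
  have h1 : B n x x' = Q n (x + x') := by
    have h2 : (1 : ZMod 2) + 1 = 0 := by decide
    rw [B, hx, hx', add_assoc, h2, add_zero]
  have h3 : B n (oddPart n x) x' + B n (oddPart n x') x = B n x x' := by
    rw [B_eq', B_eq', B_eq', ← Finset.sum_add_distrib]
    refine Finset.sum_congr rfl fun i _ => ?_
    rw [oddPart_ev, oddPart_od, oddPart_ev, oddPart_od]
    ring
  rw [hH1, hH2, ← h1, ← h3]
  exact (by unfold Xor'; decide : ∀ s t : ZMod 2, (s + t = 1 ↔ Xor' (s = 0) (t = 0))) _ _
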